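/- For the method-of-moments SRRS scheme, the worst-case conditional expected delay is attained at changepoint ν = 1: for every A > 0, θ > 0 and every j ≥ 1 with P_{θ,ν=j}(N_A ≥ j) > 0, one has E_{θ,ν=1}(N_A) ≥ E_{θ,ν=j}(N_A − j + 1 | N_A ≥ j). In particular, on the event {N_A ≥ j} the stopping time N_A^{(j)} := inf{n ≥ j : Σ_{k=j}^{n} Λ_{n,k} ≥ A} satisfies N_A^{(j)} ≥ N_A pointwise. -/

import Mathlib

open MeasureTheory ProbabilityTheory Filter
open scoped ENNReal NNReal

noncomputable section

/-- The Gamma(θ,1) density. -/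
def gam (θ x : ℝ) : ℝ := gammaPDFReal θ 1 x

namespace SRRSaux

lemma gam_of_neg {a x : ℝ} (hx : x < 0) : gam a x = 0 := by
  rw [gam, gammaPDFReal, if_neg (not_le.mpr hx)]

lemma gam_nonneg {a : ℝ} (ha : 0 ≤ a) (x : ℝ) : 0 ≤ gam a x := by
  rw [gam, gammaPDFReal]
  split_ifs with h
  · have hG : 0 ≤ Real.Gamma a := by
      rcases eq_or_lt_of_le ha with h0 | h0
      · rw [← h0, Real.Gamma_zero]
      · exact (Real.Gamma_pos_of_pos h0).le
    have h1 : (0:ℝ) ≤ (1:ℝ) ^ a / Real.Gamma a := by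
      rw [Real.one_rpow]; exact div_nonneg zero_le_one hG
    exact mul_nonneg (mul_nonneg h1 (Real.rpow_nonneg h _)) (Real.exp_nonneg _)
  · exact le_rfl

lemma measurable_Gamma : Measurable Real.Gamma := by
  have hs : MeasurableSet (Set.range (fun m : ℕ => -(m:ℝ))) :=
    (Set.countable_range _).measurableSet
  refine measurable_of_restrict_of_restrict_compl hs ?_ ?_
  · have : Countable (Set.range (fun m : ℕ => -(m:ℝ))) := (Set.countable_range _).to_subtype
    exact measurable_of_countable _
  · have hc : ContinuousOn Real.Gamma (Set.range (fun m : ℕ => -(m:ℝ)))ᶜ := by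
      intro x hx
      have hx' : ∀ m : ℕ, x ≠ -m := fun m hm => hx ⟨m, hm.symm⟩
      exact (Real.differentiableAt_Gamma hx').continuousAt.continuousWithinAt
    exact (continuousOn_iff_continuous_restrict.mp hc).measurable

lemma measurable_rpow2 : Measurable (fun p : ℝ × ℝ => p.1 ^ p.2) := by
  have h : (fun p : ℝ × ℝ => p.1 ^ p.2) = fun p : ℝ × ℝ =>
      if p.1 = 0 then (if p.2 = 0 then 1 else 0)
      else if p.1 < 0 then Real.exp (Real.log p.1 * p.2) * Real.cos (p.2 * Real.pi)
      else Real.exp (Real.log p.1 * p.2) := by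
    funext p
    rcases lt_trichotomy p.1 0 with h | h | h
    · rw [if_neg h.ne, if_pos h, Real.rpow_def_of_neg h]
    · rw [if_pos h, h]
      rcases eq_or_ne p.2 0 with h2 | h2
      · rw [if_pos h2, h2, Real.rpow_zero]
      · rw [if_neg h2, Real.zero_rpow h2]
    · rw [if_neg h.ne', if_neg (not_lt.mpr h.le), Real.rpow_def_of_pos h]
  rw [h]
  refine Measurable.ite (measurableSet_eq_fun measurable_fst measurable_const) ?_ ?_
  · exact Measurable.ite (measurableSet_eq_fun measurable_snd measurable_const)
      measurable_const measurable_const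
  · refine Measurable.ite (measurableSet_lt measurable_fst measurable_const) ?_ ?_
    · exact (((Real.measurable_log.comp measurable_fst).mul measurable_snd).exp).mul
        (Real.measurable_cos.comp (measurable_snd.mul measurable_const))
    · exact ((Real.measurable_log.comp measurable_fst).mul measurable_snd).exp

lemma measurable_gam : Measurable (fun p : ℝ × ℝ => gam p.1 p.2) := by
  have h : (fun p : ℝ × ℝ => gam p.1 p.2) = fun p : ℝ × ℝ =>
      if 0 ≤ p.2 then (1:ℝ) ^ p.1 / Real.Gamma p.1 * p.2 ^ (p.1 - 1) * Real.exp (-(1 * p.2))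
      else 0 := by
    funext p; rw [gam, gammaPDFReal]
  rw [h]
  refine Measurable.ite (measurableSet_le measurable_const measurable_snd) ?_ measurable_const
  refine Measurable.mul (Measurable.mul ?_ ?_) ?_
  · have h1 : Measurable (fun p : ℝ × ℝ => (1:ℝ) ^ p.1) := by
      simp only [Real.one_rpow]; exact measurable_const
    exact h1.div (measurable_Gamma.comp measurable_fst)
  · exact measurable_rpow2.comp (measurable_snd.prodMk (measurable_fst.sub measurable_const))
  · exact (((measurable_const.mul measurable_snd)).neg).exp

/-- estimated changepoint statistic on sequences -/
def thA (θ₀ s t : ℝ) (k i : ℕ) (x : ℕ → ℝ) : ℝ :=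
  if i = k then (if s = 0 ∨ t = 0 then θ₀ else s / t)
  else ((∑ l ∈ Finset.Ico k i, x l) + s) / (((i : ℝ) - (k : ℝ)) + t)

def lamA (θ₀ s t : ℝ) (k n : ℕ) (x : ℕ → ℝ) : ℝ :=
  ∏ i ∈ Finset.Icc k n, gam (thA θ₀ s t k i x) (x i) / gam θ₀ (x i)

def sfun (θ₀ s t : ℝ) (n : ℕ) (x : ℕ → ℝ) : ℝ := ∑ k ∈ Finset.Icc 1 n, lamA θ₀ s t k n x

def Dset (θ₀ s t A : ℝ) (n : ℕ) : Set (ℕ → ℝ) :=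
  {x | ∀ m ∈ Finset.Icc 1 n, sfun θ₀ s t m x < A}

def Ffun (θ₀ s t A : ℝ) (x : ℕ → ℝ) : ℝ≥0∞ :=
  ⨅ n ∈ {n : ℕ | 1 ≤ n ∧ A ≤ sfun θ₀ s t n x}, (n : ℝ≥0∞)

variable {θ₀ s t A : ℝ}

lemma thA_congr {k i : ℕ} {x y : ℕ → ℝ} (h : ∀ l ∈ Finset.Ico k i, x l = y l) :
    thA θ₀ s t k i x = thA θ₀ s t k i y := by
  by_cases h1 : i = k
  · rw [thA, thA, if_pos h1, if_pos h1]
  · rw [thA, thA, if_neg h1, if_neg h1, Finset.sum_congr rfl h]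

lemma lamA_congr {k n : ℕ} {x y : ℕ → ℝ} (h : ∀ l ∈ Finset.Icc k n, x l = y l) :
    lamA θ₀ s t k n x = lamA θ₀ s t k n y := by
  rw [lamA, lamA]
  refine Finset.prod_congr rfl fun i hi => ?_
  rw [Finset.mem_Icc] at hi
  rw [h i (Finset.mem_Icc.mpr hi),
    thA_congr fun l hl => h l (Finset.mem_Icc.mpr (by
      rw [Finset.mem_Ico] at hl; omega))]

lemma sfun_congr {n : ℕ} {x y : ℕ → ℝ} (h : ∀ l ∈ Finset.Icc 1 n, x l = y l) :
    sfun θ₀ s t n x = sfun θ₀ s t n y := by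
  rw [sfun, sfun]
  refine Finset.sum_congr rfl fun k hk => ?_
  rw [Finset.mem_Icc] at hk
  exact lamA_congr fun l hl => h l (Finset.mem_Icc.mpr (by rw [Finset.mem_Icc] at hl; omega))

lemma Dset_congr {n : ℕ} {x y : ℕ → ℝ} (h : ∀ l ∈ Finset.Icc 1 n, x l = y l) :
    x ∈ Dset θ₀ s t A n ↔ y ∈ Dset θ₀ s t A n := by
  simp only [Dset, Set.mem_setOf_eq]
  refine forall₂_congr fun m hm => ?_
  rw [Finset.mem_Icc] at hm
  rw [sfun_congr fun l hl => h l (Finset.mem_Icc.mpr (by rw [Finset.mem_Icc] at hl; omega))]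

lemma lamA_nonneg (hθ₀ : 0 < θ₀) (hs : 0 ≤ s) (ht : 0 ≤ t) (k n : ℕ) (x : ℕ → ℝ) :
    0 ≤ lamA θ₀ s t k n x := by
  by_cases hx : ∀ i ∈ Finset.Icc k n, 0 ≤ x i
  · refine Finset.prod_nonneg fun i hi => ?_
    refine div_nonneg (gam_nonneg ?_ _) (gam_nonneg hθ₀.le _)
    rw [Finset.mem_Icc] at hi
    rw [thA]
    split_ifs with h1 h2
    · exact hθ₀.le
    · push_neg at h2
      exact div_nonneg hs ht
    · refine div_nonneg (add_nonneg (Finset.sum_nonneg fun l hl => ?_) hs)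
        (add_nonneg ?_ ht)
      · rw [Finset.mem_Ico] at hl
        exact hx l (Finset.mem_Icc.mpr (by omega))
      · have h4 : k < i := lt_of_le_of_ne hi.1 (Ne.symm h1)
        have h3 : (k:ℝ) + 1 ≤ (i:ℝ) := by exact_mod_cast h4
        linarith
  · push_neg at hx
    obtain ⟨l, hl, hneg⟩ := hx
    rw [lamA]
    rw [Finset.prod_eq_zero hl (by rw [gam_of_neg hneg, zero_div])]

lemma measurable_thA (k i : ℕ) : Measurable (thA θ₀ s t k i) := by
  unfold thA
  by_cases h1 : i = k
  · simp only [if_pos h1]; exact measurable_const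
  · simp only [if_neg h1]
    exact ((Finset.measurable_sum _ fun l _ => measurable_pi_apply l).add_const s).div_const _

lemma measurable_lamA (k n : ℕ) : Measurable (lamA θ₀ s t k n) := by
  refine Finset.measurable_prod _ fun i _ => Measurable.div ?_ ?_
  · exact measurable_gam.comp ((measurable_thA k i).prodMk (measurable_pi_apply i))
  · exact measurable_gam.comp (measurable_const.prodMk (measurable_pi_apply i))

lemma measurable_sfun (n : ℕ) : Measurable (sfun θ₀ s t n) :=
  Finset.measurable_sum _ fun k _ => measurable_lamA k n

lemma measurable_Dset (n : ℕ) : MeasurableSet (Dset θ₀ s t A n) := by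
  have : Dset θ₀ s t A n = ⋂ m ∈ Finset.Icc 1 n, {x | sfun θ₀ s t m x < A} := by
    ext x; simp [Dset]
  rw [this]
  exact MeasurableSet.biInter (Finset.Icc 1 n).countable_toSet fun m _ =>
    measurableSet_lt (measurable_sfun m) measurable_const

lemma lt_Ffun_iff {n : ℕ} {x : ℕ → ℝ} :
    (n : ℝ≥0∞) < Ffun θ₀ s t A x ↔ x ∈ Dset θ₀ s t A n := by
  rw [Ffun]
  constructor
  · intro h m hm
    rw [Finset.mem_Icc] at hm
    by_contra hA'
    push_neg at hA'
    have h1 : (⨅ n ∈ {n : ℕ | 1 ≤ n ∧ A ≤ sfun θ₀ s t n x}, (n : ℝ≥0∞)) ≤ m :=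
      iInf₂_le m ⟨hm.1, hA'⟩
    have h2 := lt_of_lt_of_le h h1
    exact absurd (Nat.cast_lt.mp h2) (by omega)
  · intro h
    have h2 : ∀ m ∈ {m : ℕ | 1 ≤ m ∧ A ≤ sfun θ₀ s t m x}, ((n + 1 : ℕ) : ℝ≥0∞) ≤ m := by
      intro m hm
      obtain ⟨h1, hA'⟩ := hm
      have h3 : ¬ m ≤ n := fun hle => absurd (h m (Finset.mem_Icc.mpr ⟨h1, hle⟩)) (not_lt.mpr hA')
      exact Nat.cast_le.mpr (by omega)
    calc (n : ℝ≥0∞) < ((n + 1 : ℕ) : ℝ≥0∞) := Nat.cast_lt.mpr (by omega)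
    _ ≤ _ := le_iInf₂ h2

lemma one_le_Ffun (x : ℕ → ℝ) : 1 ≤ Ffun θ₀ s t A x := by
  refine le_iInf₂ fun n hn => ?_
  exact_mod_cast hn.1

lemma Ffun_natCast_or_top (x : ℕ → ℝ) :
    Ffun θ₀ s t A x = ⊤ ∨ ∃ m : ℕ, Ffun θ₀ s t A x = m := by
  rcases Set.eq_empty_or_nonempty {n : ℕ | 1 ≤ n ∧ A ≤ sfun θ₀ s t n x} with he | hne
  · left; rw [Ffun, he]; simp
  · right
    exact ⟨sInf _, le_antisymm (iInf₂_le _ (Nat.sInf_mem hne))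
      (le_iInf₂ fun n hn => Nat.cast_le.mpr (Nat.sInf_le hn))⟩

lemma tsum_rep {a : ℝ≥0∞} (h : a = ⊤ ∨ ∃ m : ℕ, a = m) :
    a = ∑' n : ℕ, (if (n : ℝ≥0∞) < a then 1 else 0) := by
  rcases h with h | ⟨m, h⟩
  · rw [h]
    simp only [ENNReal.natCast_lt_top, if_true]
    exact (ENNReal.tsum_const_eq_top_of_ne_zero one_ne_zero).symm
  · rw [h]
    rw [tsum_eq_sum (s := Finset.range m)
      (fun b hb => if_neg (not_lt.mpr (Nat.cast_le.mpr (by simpa using hb))))]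
    rw [Finset.sum_congr rfl fun b hb => if_pos (Nat.cast_lt.mpr (Finset.mem_range.mp hb))]
    simp

lemma measurable_Ffun : Measurable (Ffun θ₀ s t A) := by
  have h : Ffun θ₀ s t A = fun x =>
      ⨅ n : ℕ, if 1 ≤ n ∧ A ≤ sfun θ₀ s t n x then (n : ℝ≥0∞) else ⊤ := by
    funext x
    rw [Ffun]
    exact iInf_congr fun n => iInf_eq_if _
  rw [h]
  refine Measurable.iInf fun n => ?_
  have h2 : MeasurableSet {x : ℕ → ℝ | 1 ≤ n ∧ A ≤ sfun θ₀ s t n x} := by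
    by_cases h1 : 1 ≤ n
    · have : {x : ℕ → ℝ | 1 ≤ n ∧ A ≤ sfun θ₀ s t n x} = {x | A ≤ sfun θ₀ s t n x} := by
        ext x; simp [h1]
      rw [this]; exact measurableSet_le measurable_const (measurable_sfun n)
    · have : {x : ℕ → ℝ | 1 ≤ n ∧ A ≤ sfun θ₀ s t n x} = ∅ := by
        ext x; simp [h1]
      rw [this]; exact MeasurableSet.empty
  exact Measurable.ite h2 measurable_const measurable_const

lemma lintegral_Ffun {Ω : Type*} [MeasurableSpace Ω] (g : Ω → ℕ → ℝ) (hg : Measurable g)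
    (μ : Measure Ω) :
    ∫⁻ ω, Ffun θ₀ s t A (g ω) ∂μ = ∑' n : ℕ, μ (g ⁻¹' Dset θ₀ s t A n) := by
  have h1 : ∀ ω, Ffun θ₀ s t A (g ω) =
      ∑' n : ℕ, (g ⁻¹' Dset θ₀ s t A n).indicator (fun _ => (1 : ℝ≥0∞)) ω := by
    intro ω
    rw [tsum_rep (Ffun_natCast_or_top (g ω))]
    refine tsum_congr fun n => ?_
    by_cases h : (n : ℝ≥0∞) < Ffun θ₀ s t A (g ω)
    · rw [if_pos h]
      exact (Set.indicator_of_mem (Set.mem_preimage.mpr (lt_Ffun_iff.mp h)) (fun _ => (1:ℝ≥0∞))).symm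
    · rw [if_neg h]
      exact (Set.indicator_of_notMem
        (fun hx => h (lt_Ffun_iff.mpr (Set.mem_preimage.mp hx))) (fun _ => (1:ℝ≥0∞))).symm
  calc ∫⁻ ω, Ffun θ₀ s t A (g ω) ∂μ
      = ∫⁻ ω, ∑' n : ℕ, (g ⁻¹' Dset θ₀ s t A n).indicator (fun _ => (1 : ℝ≥0∞)) ω ∂μ :=
        lintegral_congr h1
    _ = ∑' n : ℕ, ∫⁻ ω, (g ⁻¹' Dset θ₀ s t A n).indicator (fun _ => (1 : ℝ≥0∞)) ω ∂μ :=
        lintegral_tsum fun n =>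
          (measurable_const.indicator (hg (measurable_Dset n))).aemeasurable
    _ = ∑' n : ℕ, μ (g ⁻¹' Dset θ₀ s t A n) := by
        refine tsum_congr fun n => ?_
        rw [lintegral_indicator (hg (measurable_Dset n)), setLIntegral_const, one_mul]

end SRRSaux


open SRRSaux

/-- for the method-of-moments SRRS scheme the worst-case conditional
expected delay is attained at changepoint `ν = 1`: for every `j ≥ 1` with
`P_{θ,ν=j}(N_A ≥ j) > 0`, `E_{θ,ν=1}(N_A) ≥ E_{θ,ν=j}(N_A − j + 1 | N_A ≥ j)`;
moreover, on `{N_A ≥ j}` one has `N_A^{(j)} ≥ N_A` pointwise. -/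
theorem srrs_worst_delay_at_one
    {Ω : Type*} [MeasurableSpace Ω]
    (θ₀ θ : ℝ) (hθ₀ : 0 < θ₀) (hθ : 0 < θ)
    (X : ℕ → Ω → ℝ) (hXmeas : ∀ i, Measurable (X i))
    (P : ℕ → Measure Ω) (hP : ∀ ν, 1 ≤ ν → IsProbabilityMeasure (P ν))
    (hindep : ∀ ν, 1 ≤ ν → iIndepFun X (P ν))
    (hlaw : ∀ ν, 1 ≤ ν → ∀ i, 1 ≤ i →
      Measure.map (X i) (P ν) = gammaMeasure (if i < ν then θ₀ else θ) 1)
    (s t : ℝ) (hs : 0 ≤ s) (ht : 0 ≤ t)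
    (θnk : ℕ → ℕ → Ω → ℝ)
    (hθkk : ∀ k ω, θnk k k ω = if s = 0 ∨ t = 0 then θ₀ else s / t)
    (hθnk : ∀ k n ω, k < n →
      θnk k n ω = ((∑ i ∈ Finset.Ico k n, X i ω) + s) / (((n : ℝ) - (k : ℝ)) + t))
    (Λ : ℕ → ℕ → Ω → ℝ)
    (hΛ : ∀ k n ω, Λ k n ω = ∏ i ∈ Finset.Icc k n, gam (θnk k i ω) (X i ω) / gam θ₀ (X i ω))
    (R : ℕ → Ω → ℝ) (hR : ∀ n ω, R n ω = ∑ k ∈ Finset.Icc 1 n, Λ k n ω)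
    (A : ℝ) (hA : 0 < A)
    (N : Ω → ℝ≥0∞)
    (hN : ∀ ω, N ω = ⨅ n ∈ {n : ℕ | 1 ≤ n ∧ A ≤ R n ω}, (n : ℝ≥0∞))
    -- N_A^{(j)} = inf{n ≥ j : Σ_{k=j}^{n} Λ_{n,k} ≥ A}
    (Nj : ℕ → Ω → ℝ≥0∞)
    (hNj : ∀ j ω, Nj j ω =
      ⨅ n ∈ {n : ℕ | j ≤ n ∧ A ≤ ∑ k ∈ Finset.Icc j n, Λ k n ω}, (n : ℝ≥0∞)) :
    (∀ j : ℕ, 1 ≤ j → ∀ ω, (j : ℝ≥0∞) ≤ N ω → N ω ≤ Nj j ω) ∧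
      ∀ j : ℕ, 1 ≤ j → (P j) {ω | (j : ℝ≥0∞) ≤ N ω} ≠ 0 →
        (∫⁻ ω in {ω | (j : ℝ≥0∞) ≤ N ω}, (N ω - (j : ℝ≥0∞) + 1) ∂(P j)) /
            ((P j) {ω | (j : ℝ≥0∞) ≤ N ω})
          ≤ ∫⁻ ω, N ω ∂(P 1) := by
  classical
  -- shift identities
  have hthX : ∀ (dd k i : ℕ) (ω : Ω), k ≤ i →
      thA θ₀ s t k i (fun l => X (l + dd) ω) = θnk (k + dd) (i + dd) ω := by
    intro dd k i ω hki
    rcases eq_or_lt_of_le hki with rfl | hlt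
    · rw [thA, if_pos rfl, hθkk]
    · rw [thA, if_neg (by omega : ¬ i = k), hθnk _ _ _ (by omega)]
      have hsum : (∑ l ∈ Finset.Ico k i, X (l + dd) ω)
          = ∑ l ∈ Finset.Ico (k + dd) (i + dd), X l ω := by
        rw [← Finset.map_add_right_Ico, Finset.sum_map]
        simp only [addRightEmbedding_apply]
      rw [hsum]
      congr 1
      push_cast
      ring
  have hlamX : ∀ (dd k n : ℕ) (ω : Ω),
      lamA θ₀ s t k n (fun l => X (l + dd) ω) = Λ (k + dd) (n + dd) ω := by
    intro dd k n ω
    rw [hΛ, lamA, ← Finset.map_add_right_Icc, Finset.prod_map]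
    refine Finset.prod_congr rfl fun i hi => ?_
    rw [Finset.mem_Icc] at hi
    simp only [addRightEmbedding_apply]
    rw [hthX dd k i ω hi.1]
  have hlamX0 : ∀ (k n : ℕ) (ω : Ω), lamA θ₀ s t k n (fun l => X l ω) = Λ k n ω := by
    intro k n ω
    have h := hlamX 0 k n ω
    simp only [add_zero] at h
    exact h
  have hR' : ∀ (n : ℕ) (ω : Ω), R n ω = sfun θ₀ s t n (fun i => X i ω) := by
    intro n ω
    rw [hR, sfun]
    exact Finset.sum_congr rfl fun k _ => (hlamX0 k n ω).symm
  have hNF : ∀ ω, N ω = Ffun θ₀ s t A (fun i => X i ω) := by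
    intro ω
    rw [hN, Ffun]
    simp only [hR']
  have hΛnn : ∀ (k n : ℕ) (ω : Ω), 0 ≤ Λ k n ω := by
    intro k n ω
    rw [← hlamX0 k n ω]
    exact lamA_nonneg hθ₀ hs ht k n _
  -- part 1
  have part1 : ∀ j : ℕ, 1 ≤ j → ∀ ω, (j : ℝ≥0∞) ≤ N ω → N ω ≤ Nj j ω := by
    intro j hj ω _
    rw [hNj]
    refine le_iInf₂ fun n hn => ?_
    obtain ⟨hjn, hA'⟩ := hn
    rw [hN]
    refine iInf₂_le n ⟨by omega, ?_⟩
    rw [hR]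
    refine le_trans hA' (Finset.sum_le_sum_of_subset_of_nonneg
      (Finset.Icc_subset_Icc (by omega) le_rfl) ?_)
    intro k _ _
    exact hΛnn k n ω
  refine ⟨part1, ?_⟩
  intro j hj hne
  haveI := hP j hj
  haveI := hP 1 le_rfl
  haveI : IsProbabilityMeasure (gammaMeasure θ 1) := isProbabilityMeasure_gammaMeasure hθ one_pos
  set d := j - 1 with hd
  set S := {ω : Ω | (j : ℝ≥0∞) ≤ N ω} with hSdef
  set Φ : Ω → ℕ → ℝ := fun ω i => X (i + d) ω with hΦ
  have hΦm : Measurable Φ := measurable_pi_lambda _ fun i => hXmeas _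
  set W : Ω → ℕ → ℝ := fun ω i => X i ω with hW
  have hWm : Measurable W := measurable_pi_lambda _ fun i => hXmeas _
  set H : Ω → ℝ≥0∞ := fun ω => Ffun θ₀ s t A (Φ ω) with hH
  have hHm : Measurable H := measurable_Ffun.comp hΦm
  have hH1 : ∀ ω, 1 ≤ H ω := fun ω => one_le_Ffun _
  -- the sums appearing in Ffun ∘ Φ
  have hsfx : ∀ (ω : Ω) (m : ℕ),
      sfun θ₀ s t m (Φ ω) = ∑ k ∈ Finset.Icc j (m + d), Λ k (m + d) ω := by
    intro ω m
    rw [sfun, Finset.sum_congr rfl fun k _ => hlamX d k m ω]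
    have h2 : Finset.Icc j (m + d) = (Finset.Icc 1 m).map (addRightEmbedding d) := by
      rw [Finset.map_add_right_Icc]
      congr 1
      omega
    rw [h2, Finset.sum_map]
    simp only [addRightEmbedding_apply]
  -- identification of Nj with the shifted stopping time
  have hNjF : ∀ ω, Nj j ω = H ω + (d : ℝ≥0∞) := by
    intro ω
    rw [hNj]
    show _ = Ffun θ₀ s t A (Φ ω) + (d : ℝ≥0∞)
    rw [Ffun]
    apply le_antisymm
    · rcases Set.eq_empty_or_nonempty {m : ℕ | 1 ≤ m ∧ A ≤ sfun θ₀ s t m (Φ ω)} with he | hne'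
      · rw [he]
        simp
      · have hmem := Nat.sInf_mem hne'
        have h1 : (⨅ m ∈ {m : ℕ | 1 ≤ m ∧ A ≤ sfun θ₀ s t m (Φ ω)}, (m : ℝ≥0∞))
            = ((sInf {m : ℕ | 1 ≤ m ∧ A ≤ sfun θ₀ s t m (Φ ω)} : ℕ) : ℝ≥0∞) :=
          le_antisymm (iInf₂_le _ hmem) (le_iInf₂ fun m hm => Nat.cast_le.mpr (Nat.sInf_le hm))
        rw [h1, ← Nat.cast_add]
        refine iInf₂_le _ ⟨?_, ?_⟩
        · have := hmem.1
          omega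
        · have h3 := hmem.2
          rw [hsfx ω _] at h3
          exact h3
    · refine le_iInf₂ fun n hn => ?_
      obtain ⟨hjn, hA'⟩ := hn
      have hm : (n - d) ∈ {m : ℕ | 1 ≤ m ∧ A ≤ sfun θ₀ s t m (Φ ω)} := by
        refine ⟨by omega, ?_⟩
        rw [hsfx ω (n - d), (by omega : n - d + d = n)]
        exact hA'
      calc (⨅ m ∈ {m : ℕ | 1 ≤ m ∧ A ≤ sfun θ₀ s t m (Φ ω)}, (m : ℝ≥0∞)) + (d : ℝ≥0∞)
          ≤ ((n - d : ℕ) : ℝ≥0∞) + (d : ℝ≥0∞) := add_le_add_left (iInf₂_le _ hm) _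
        _ = (n : ℝ≥0∞) := by
            rw [← Nat.cast_add]
            congr 1
            omega
  -- S as a cylinder event
  have hSeq : S = W ⁻¹' Dset θ₀ s t A d := by
    ext ω
    simp only [hSdef, Set.mem_setOf_eq, Set.mem_preimage]
    rw [← lt_Ffun_iff, ← hNF ω]
    rcases (by rw [hNF]; exact Ffun_natCast_or_top _ : N ω = ⊤ ∨ ∃ m : ℕ, N ω = m) with
      htop | ⟨m, hm⟩
    · rw [htop]
      simp only [le_top, ENNReal.natCast_lt_top]
    · rw [hm, Nat.cast_le, Nat.cast_lt]
      omega
  have hSm : MeasurableSet S := hSeq ▸ hWm (measurable_Dset d)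
  set E : ℕ → Set Ω := fun n => Φ ⁻¹' Dset θ₀ s t A n with hE
  have hEm : ∀ n, MeasurableSet (E n) := fun n => hΦm (measurable_Dset n)
  -- pointwise inequality on S
  have hptw : ∀ ω ∈ S, N ω - j + 1 ≤ H ω := by
    intro ω hω
    have h1 : N ω ≤ H ω + d := by
      rw [← hNjF]
      exact part1 j hj ω hω
    have hjc : (j : ℝ≥0∞) = (d : ℝ≥0∞) + 1 := by
      rw [← Nat.cast_one, ← Nat.cast_add]
      congr 1
      omega
    calc N ω - j + 1 ≤ (H ω + d) - j + 1 := add_le_add_left (tsub_le_tsub_right h1 _) _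
      _ = H ω := by
          rw [hjc, tsub_add_eq_tsub_tsub, ENNReal.add_sub_cancel_right (ENNReal.natCast_ne_top d),
            tsub_add_cancel_of_le (hH1 ω)]
  -- independence of E n and S
  have hind : ∀ n : ℕ, P j (E n ∩ S) = P j (E n) * P j S := by
    intro n
    set s1 : Finset ℕ := Finset.Icc 1 d with hs1
    set s2 : Finset ℕ := Finset.Icc j (j + n) with hs2
    have hdisj : Disjoint s1 s2 := by
      rw [Finset.disjoint_left]
      intro a ha1 ha2
      rw [hs1, Finset.mem_Icc] at ha1
      rw [hs2, Finset.mem_Icc] at ha2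
      omega
    set e1 : ({x // x ∈ s1} → ℝ) → (ℕ → ℝ) :=
      fun y i => if h : i ∈ s1 then y ⟨i, h⟩ else 0 with he1def
    have he1 : Measurable e1 := by
      refine measurable_pi_lambda _ fun i => ?_
      by_cases h : i ∈ s1
      · simp only [he1def, dif_pos h]
        exact measurable_pi_apply _
      · simp only [he1def, dif_neg h]
        exact measurable_const
    set e2 : ({x // x ∈ s2} → ℝ) → (ℕ → ℝ) :=
      fun y i => if h : i + d ∈ s2 then y ⟨i + d, h⟩ else 0 with he2def
    have he2 : Measurable e2 := by
      refine measurable_pi_lambda _ fun i => ?_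
      by_cases h : i + d ∈ s2
      · simp only [he2def, dif_pos h]
        exact measurable_pi_apply _
      · simp only [he2def, dif_neg h]
        exact measurable_const
    have hS1 : S = (fun ω (i : {x // x ∈ s1}) => X i ω) ⁻¹' (e1 ⁻¹' Dset θ₀ s t A d) := by
      rw [hSeq]
      ext ω
      simp only [Set.mem_preimage]
      refine Dset_congr fun l hl => ?_
      have hl1 : l ∈ s1 := by
        rw [hs1]
        exact hl
      show X l ω = e1 (fun i : {x // x ∈ s1} => X (i : ℕ) ω) l
      rw [he1def]
      simp only [dif_pos hl1]
    have hE1 : E n = (fun ω (i : {x // x ∈ s2}) => X i ω) ⁻¹' (e2 ⁻¹' Dset θ₀ s t A n) := by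
      rw [hE]
      ext ω
      simp only [Set.mem_preimage]
      refine Dset_congr fun l hl => ?_
      rw [Finset.mem_Icc] at hl
      have hl2 : l + d ∈ s2 := by
        rw [hs2, Finset.mem_Icc]
        omega
      show X (l + d) ω = e2 (fun i : {x // x ∈ s2} => X (i : ℕ) ω) l
      rw [he2def]
      simp only [dif_pos hl2]
    have hIF := (hindep j hj).indepFun_finset s1 s2 hdisj hXmeas
    have hkey := hIF.measure_inter_preimage_eq_mul (e1 ⁻¹' Dset θ₀ s t A d)
      (e2 ⁻¹' Dset θ₀ s t A n) (he1 (measurable_Dset d)) (he2 (measurable_Dset n))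
    rw [hS1, hE1, Set.inter_comm, hkey, mul_comm]
  -- distribution of shifted tuples
  have hmap : ∀ (ν : ℕ), 1 ≤ ν → ∀ (n : ℕ),
      Measure.map (fun ω (i : Fin n) => X ((i : ℕ) + ν) ω) (P ν)
        = Measure.pi (fun _ : Fin n => gammaMeasure θ 1) := by
    intro ν hν n
    haveI := hP ν hν
    have htm : Measurable (fun ω (i : Fin n) => X ((i : ℕ) + ν) ω) :=
      measurable_pi_lambda _ fun i => hXmeas _
    refine (Measure.pi_eq fun u hu => ?_).symm
    rw [Measure.map_apply htm (MeasurableSet.univ_pi hu)]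
    set sSet : ℕ → Set ℝ := fun l => if h : l - ν < n then u ⟨l - ν, h⟩ else Set.univ with hsSet
    have hss : ∀ i : Fin n, sSet ((i : ℕ) + ν) = u i := by
      intro i
      rw [hsSet]
      have h1 : (i : ℕ) + ν - ν < n := by
        have := i.isLt
        omega
      simp only [dif_pos h1]
      rw [show (⟨(i : ℕ) + ν - ν, h1⟩ : Fin n) = i from Fin.ext (show (i : ℕ) + ν - ν = (i : ℕ) by omega)]
    have hpre : (fun ω (i : Fin n) => X ((i : ℕ) + ν) ω) ⁻¹' Set.pi Set.univ u
        = ⋂ l ∈ Finset.image (fun i : Fin n => (i : ℕ) + ν) Finset.univ,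
            X l ⁻¹' sSet l := by
      ext ω
      simp only [Set.mem_preimage, Set.mem_pi, Set.mem_univ, true_implies, Set.mem_iInter,
        Finset.mem_image, Finset.mem_univ, true_and]
      constructor
      · rintro h l ⟨i, rfl⟩
        rw [hss i]
        exact h i
      · intro h i
        rw [← hss i]
        exact h _ ⟨i, rfl⟩
    rw [hpre]
    rw [(hindep ν hν).meas_biInter (fun l _ => ⟨sSet l, by
      rw [hsSet]
      by_cases h : l - ν < n
      · simp only [dif_pos h]
        exact hu _
      · simp only [dif_neg h]
        exact MeasurableSet.univ, rfl⟩)]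
    rw [Finset.prod_image (fun a _ b _ hab => by omega)]
    have hsm : ∀ l, MeasurableSet (sSet l) := by
      intro l
      rw [hsSet]
      by_cases h : l - ν < n
      · simp only [dif_pos h]
        exact hu _
      · simp only [dif_neg h]
        exact MeasurableSet.univ
    refine Finset.prod_congr rfl fun i _ => ?_
    rw [← hss i, ← Measure.map_apply (hXmeas _) (hsm _), hlaw ν hν _ (by omega),
      if_neg (by omega)]
  -- identification of the laws of the events E n
  set en : ∀ n : ℕ, (Fin n → ℝ) → (ℕ → ℝ) := fun n y i =>
    if h : 1 ≤ i ∧ i ≤ n then y ⟨i - 1, by omega⟩ else 0 with hen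
  have henm : ∀ n, Measurable (en n) := by
    intro n
    refine measurable_pi_lambda _ fun i => ?_
    by_cases h : 1 ≤ i ∧ i ≤ n
    · simp only [hen, dif_pos h]
      exact measurable_pi_apply _
    · simp only [hen, dif_neg h]
      exact measurable_const
  have hEfin : ∀ (ν : ℕ), 1 ≤ ν → ∀ (n : ℕ) (ω : Ω),
      ((fun l => X (l + (ν - 1)) ω) ∈ Dset θ₀ s t A n
        ↔ en n (fun i : Fin n => X ((i : ℕ) + ν) ω) ∈ Dset θ₀ s t A n) := by
    intro ν hν n ω
    refine Dset_congr fun l hl => ?_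
    rw [Finset.mem_Icc] at hl
    have h1 : 1 ≤ l ∧ l ≤ n := hl
    show X (l + (ν - 1)) ω = en n (fun i : Fin n => X ((i : ℕ) + ν) ω) l
    rw [hen]
    simp only [dif_pos h1]
    show X (l + (ν - 1)) ω = X (l - 1 + ν) ω
    rw [(by omega : l + (ν - 1) = l - 1 + ν)]
  have hPE : ∀ n : ℕ, P j (E n) = P 1 (W ⁻¹' Dset θ₀ s t A n) := by
    intro n
    have htmj : Measurable (fun ω (i : Fin n) => X ((i : ℕ) + j) ω) :=
      measurable_pi_lambda _ fun i => hXmeas _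
    have htm1 : Measurable (fun ω (i : Fin n) => X ((i : ℕ) + 1) ω) :=
      measurable_pi_lambda _ fun i => hXmeas _
    have h1 : E n = (fun ω (i : Fin n) => X ((i : ℕ) + j) ω) ⁻¹' (en n ⁻¹' Dset θ₀ s t A n) := by
      rw [hE]
      ext ω
      simp only [Set.mem_preimage]
      exact hEfin j hj n ω
    have h2 : W ⁻¹' Dset θ₀ s t A n
        = (fun ω (i : Fin n) => X ((i : ℕ) + 1) ω) ⁻¹' (en n ⁻¹' Dset θ₀ s t A n) := by
      ext ω
      simp only [Set.mem_preimage]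
      have h3 := hEfin 1 le_rfl n ω
      simp only [Nat.sub_self, add_zero] at h3
      exact h3
    rw [h1, h2, ← Measure.map_apply htmj (henm n (measurable_Dset n)),
      ← Measure.map_apply htm1 (henm n (measurable_Dset n)), hmap j hj n, hmap 1 le_rfl n]
  -- integral identities
  have hHint : ∫⁻ ω, H ω ∂(P j) = ∑' n : ℕ, P j (E n) := lintegral_Ffun Φ hΦm (P j)
  have hNint : ∫⁻ ω, N ω ∂(P 1) = ∑' n : ℕ, P 1 (W ⁻¹' Dset θ₀ s t A n) := by
    calc ∫⁻ ω, N ω ∂(P 1) = ∫⁻ ω, Ffun θ₀ s t A (W ω) ∂(P 1) := lintegral_congr hNF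
      _ = _ := lintegral_Ffun W hWm (P 1)
  have hrestr : ∫⁻ ω in S, H ω ∂(P j) = ∑' n : ℕ, P j (E n ∩ S) := by
    rw [lintegral_Ffun Φ hΦm ((P j).restrict S)]
    exact tsum_congr fun n => Measure.restrict_apply (hEm n)
  have hchain : ∫⁻ ω in S, (N ω - j + 1) ∂(P j) ≤ (∫⁻ ω, N ω ∂(P 1)) * P j S := by
    calc ∫⁻ ω in S, (N ω - j + 1) ∂(P j) ≤ ∫⁻ ω in S, H ω ∂(P j) :=
          setLIntegral_mono hHm hptw
      _ = ∑' n : ℕ, P j (E n ∩ S) := hrestr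
      _ = ∑' n : ℕ, P j (E n) * P j S := tsum_congr hind
      _ = (∑' n : ℕ, P j (E n)) * P j S := ENNReal.tsum_mul_right
      _ = (∫⁻ ω, N ω ∂(P 1)) * P j S := by
          congr 1
          rw [hNint]
          exact tsum_congr hPE
  rw [ENNReal.div_le_iff hne (measure_ne_top _ _)]
  exact hchain
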